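/- For any base-superset x (r(x) = n) of a matroid M of rank n on m elements with weight w : E → positive integers, and any base z of minimum weight, there exist at most n two-element exchanges (add one element, remove one element) and at most m − n single-element removals on x whose total weight decrease sums to at least w(x) − OPT, where OPT is the minimum base weight. -/

import Mathlib

open Set

/-- An independent set contained in the closure of `T` has at most `|T|` elements. -/
private lemma card_le_of_indep_subset_closure {α : Type*} [Fintype α] {M : Matroid α}
    {I T : Set α} (hI : M.Indep I) (hT : T ⊆ M.E) (hIT : I ⊆ M.closure T) :
    I.ncard ≤ T.ncard := by
  obtain ⟨J, hJ⟩ := M.exists_isBasis T hT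
  obtain ⟨I', hI', hII'⟩ := hI.subset_isBasis_of_subset hIT (M.closure_subset_ground T)
  have hJ' : M.IsBasis J (M.closure T) := hJ.isBasis_closure_right
  have hcard : I'.ncard = J.ncard :=
    hI'.isBase_restrict.ncard_eq_ncard_of_isBase hJ'.isBase_restrict
  calc I.ncard ≤ I'.ncard := Set.ncard_le_ncard hII' (Set.toFinite _)
    _ = J.ncard := hcard
    _ ≤ T.ncard := Set.ncard_le_ncard hJ.subset (Set.toFinite _)

/-- Fundamental-circuit style lemma: `a` lies in the closure of the set of elements
`b` of a base `B` for which `a ∉ cl (B \ {b})`. -/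
private lemma mem_closure_exchange_set {α : Type*} [Fintype α] {M : Matroid α}
    {B : Set α} {a : α} (hB : M.IsBase B) (haE : a ∈ M.E) :
    a ∈ M.closure {b | b ∈ B ∧ a ∉ M.closure (B \ {b})} := by
  classical
  have hQ : ∃ k, ∃ J : Set α, J ⊆ B ∧ a ∈ M.closure J ∧ J.ncard = k :=
    ⟨B.ncard, B, subset_rfl, by rw [hB.closure_eq]; exact haE, rfl⟩
  obtain ⟨J, hJB, haJ, hJcard⟩ := Nat.find_spec hQ
  refine (M.closure_subset_closure ?_) haJ
  intro b hbJ
  have hmin : a ∉ M.closure (J \ {b}) := by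
    intro hcon
    have hlt : (J \ {b}).ncard < Nat.find hQ := by
      rw [← hJcard]
      exact Set.ncard_diff_singleton_lt_of_mem hbJ (Set.toFinite _)
    exact Nat.find_min hQ hlt ⟨J \ {b}, diff_subset.trans hJB, hcon, rfl⟩
  refine ⟨hJB hbJ, fun hcon => ?_⟩
  have hJeq : insert b (J \ {b}) = J := by
    rw [Set.insert_diff_singleton, Set.insert_eq_self.mpr hbJ]
  have hex : b ∈ M.closure (insert a (J \ {b})) \ M.closure (J \ {b}) :=
    Matroid.closure_exchange ⟨by rwa [hJeq], hmin⟩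
  have hsub : insert a (J \ {b}) ⊆ M.closure (B \ {b}) :=
    insert_subset hcon ((diff_subset_diff_left hJB).trans
      (M.subset_closure (B \ {b}) (diff_subset.trans hB.subset_ground)))
  exact hB.indep.notMem_closure_diff_of_mem (hJB hbJ)
    ((M.closure_subset_closure_of_subset_closure hsub) hex.1)

set_option maxHeartbeats 1000000 in
/-- for any superset `x` of a base (a spanning set) of a rank-`n` matroid on
`m` elements with positive integer weights, and a minimum-weight base `z`, there are at
most `n` two-element exchanges (add `a ∉ x`, remove `b ∈ x`) and at most `m − n`
single-element removals, all keeping the set spanning, whose weight decreases sum to at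
least `w(x) − OPT`. -/
theorem drift_exchanges_exist
    {α : Type*} [Fintype α] [DecidableEq α] (M : Matroid α) (w : α → ℤ)
    (hw : ∀ e, 0 < w e)
    (m n : ℕ) (hm : m = Fintype.card α)
    (x : Set α) (hxE : x ⊆ M.E) (hspan : ∃ B : Set α, M.IsBase B ∧ B ⊆ x)
    (z : Set α) (hz : M.IsBase z) (hzn : z.ncard = n)
    (hzmin : ∀ b : Set α, M.IsBase b → (∑ᶠ e ∈ z, w e) ≤ ∑ᶠ e ∈ b, w e) :
    ∃ (X : Finset (α × α)) (Y : Finset α),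
      X.card ≤ n ∧ Y.card ≤ m - n ∧
      (∀ p ∈ X, p.1 ∉ x ∧ p.2 ∈ x ∧
        ∃ B : Set α, M.IsBase B ∧ B ⊆ insert p.1 x \ {p.2}) ∧
      (∀ e ∈ Y, e ∈ x ∧ ∃ B : Set α, M.IsBase B ∧ B ⊆ x \ {e}) ∧
      (∑ᶠ e ∈ x, w e) - (∑ᶠ e ∈ z, w e) ≤
        (∑ p ∈ X, (w p.2 - w p.1)) + ∑ e ∈ Y, w e := by
  classical
  obtain ⟨B0, hB0, hB0x⟩ := hspan
  have hzE := hz.subset_ground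
  have hzx_indep : M.Indep (z ∩ x) := hz.indep.subset inter_subset_left
  obtain ⟨B, hBx, hzxB⟩ := hzx_indep.subset_isBasis_of_subset inter_subset_right hxE
  have hBbase : M.IsBase B := hBx.indep.isBase_of_ground_subset_closure (by
    rw [hBx.closure_eq_closure, ← hB0.closure_eq]
    exact M.closure_subset_closure hB0x)
  have hBn : B.ncard = n := by rw [hBbase.ncard_eq_ncard_of_isBase hz, hzn]
  have hBsub : B ⊆ x := hBx.subset
  have hzB : z \ B = z \ x := by
    ext e
    exact ⟨fun ⟨hez, heB⟩ => ⟨hez, fun hex => heB (hzxB ⟨hez, hex⟩)⟩,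
      fun ⟨hez, hex⟩ => ⟨hez, fun heB => hex (hBsub heB)⟩⟩
  set Zd : Finset α := (z \ B).toFinset with hZd
  set Bd : Finset α := (B \ z).toFinset with hBd
  set r : α → Finset α := fun a => Bd.filter (fun b => a ∉ M.closure (B \ {b})) with hr
  -- Hall's condition
  have hHall : ∀ A : Finset ↥Zd, A.card ≤ (A.biUnion (fun a => r a.1)).card := by
    intro A
    set S : Set α := ↑(A.image (fun a => (a.1 : α))) with hS
    set T : Set α := ↑(A.biUnion (fun a => r a.1)) with hT
    have hSz : S ⊆ z \ B := by
      intro e he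
      simp only [hS, Finset.coe_image, Set.mem_image] at he
      obtain ⟨a, -, rfl⟩ := he
      exact Set.mem_toFinset.mp a.2
    have hTB : T ⊆ B \ z := by
      intro e he
      simp only [hT, Finset.mem_coe, Finset.mem_biUnion] at he
      obtain ⟨a, -, ha⟩ := he
      exact Set.mem_toFinset.mp (Finset.mem_filter.mp ha).1
    have hind : M.Indep (S ∪ B ∩ z) :=
      hz.indep.subset (union_subset (fun e he => (hSz he).1) inter_subset_right)
    have hTE : T ∪ B ∩ z ⊆ M.E :=
      union_subset ((hTB.trans diff_subset).trans hBbase.subset_ground)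
        (inter_subset_left.trans hBbase.subset_ground)
    have hclsub : S ∪ B ∩ z ⊆ M.closure (T ∪ B ∩ z) := by
      refine union_subset (fun a haS => ?_)
        ((subset_union_right).trans (M.subset_closure _ hTE))
      have haz := hSz haS
      refine M.closure_subset_closure ?_ (mem_closure_exchange_set hBbase (hzE haz.1))
      rintro b ⟨hbB, hbcl⟩
      by_cases hbz : b ∈ z
      · exact Or.inr ⟨hbB, hbz⟩
      · left
        simp only [hS, Finset.coe_image, Set.mem_image] at haS
        obtain ⟨a', ha'A, rfl⟩ := haS
        simp only [hT, Finset.mem_coe, Finset.mem_biUnion]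
        exact ⟨a', ha'A, Finset.mem_filter.mpr ⟨Set.mem_toFinset.mpr ⟨hbB, hbz⟩, hbcl⟩⟩
    have hdS : Disjoint S (B ∩ z) :=
      disjoint_left.mpr fun e he hbz => (hSz he).2 hbz.1
    have hdT : Disjoint T (B ∩ z) :=
      disjoint_left.mpr fun e he hbz => (hTB he).2 hbz.2
    have key : (S ∪ B ∩ z).ncard ≤ (T ∪ B ∩ z).ncard :=
      card_le_of_indep_subset_closure hind hTE hclsub
    rw [Set.ncard_union_eq hdS (Set.toFinite _) (Set.toFinite _),
      Set.ncard_union_eq hdT (Set.toFinite _) (Set.toFinite _)] at key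
    have hScard : S.ncard = A.card := by
      rw [hS, Set.ncard_coe_finset,
        Finset.card_image_of_injective _ Subtype.val_injective]
    have hTcard : T.ncard = (A.biUnion (fun a => r a.1)).card := by
      rw [hT, Set.ncard_coe_finset]
    omega
  obtain ⟨f, hfinj, hfr⟩ :=
    (Finset.all_card_le_biUnion_card_iff_exists_injective (fun a : ↥Zd => r a.1)).mp hHall
  have hmemZd : ∀ a : ↥Zd, (a : α) ∈ z \ B := fun a => Set.mem_toFinset.mp a.2
  have hfBd : ∀ a : ↥Zd, f a ∈ B \ z := fun a =>
    Set.mem_toFinset.mp (Finset.mem_filter.mp (hfr a)).1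
  have hbase : ∀ a : ↥Zd, M.IsBase (insert (a : α) (B \ {f a})) := by
    intro a
    have h := Finset.mem_filter.mp (hfr a)
    have haz := hmemZd a
    have hindep : M.Indep (insert (a : α) (B \ {f a})) := by
      rw [(hBbase.indep.subset diff_subset).insert_indep_iff_of_notMem
        (fun hc => haz.2 hc.1)]
      exact ⟨hzE haz.1, h.2⟩
    exact hBbase.exchange_isBase_of_indep haz.2 hindep
  refine ⟨Finset.univ.image (fun a : ↥Zd => ((a : α), f a)), (x \ B).toFinset,
    ?_, ?_, ?_, ?_, ?_⟩
  · rw [Finset.card_image_of_injective _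
      (fun a b h => Subtype.ext (congrArg Prod.fst h) : Function.Injective
        (fun a : ↥Zd => ((a : α), f a))), Finset.card_univ, Fintype.card_coe]
    calc Zd.card = (z \ B).ncard := (Set.ncard_eq_toFinset_card' _).symm
      _ ≤ z.ncard := Set.ncard_le_ncard diff_subset (Set.toFinite _)
      _ = n := hzn
  · rw [← Set.ncard_eq_toFinset_card']
    have h1 : (x \ B).ncard = x.ncard - B.ncard := Set.ncard_diff hBsub (Set.toFinite _)
    have h2 : x.ncard ≤ m := by
      calc x.ncard ≤ (Set.univ : Set α).ncard :=
            Set.ncard_le_ncard (subset_univ x) (Set.toFinite _)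
        _ = Nat.card α := Set.ncard_univ α
        _ = m := by rw [hm, Nat.card_eq_fintype_card]
    omega
  · intro p hp
    simp only [Finset.mem_image, Finset.mem_univ, true_and] at hp
    obtain ⟨a, rfl⟩ := hp
    have haz := hmemZd a
    have hfa := hfBd a
    have hne : (a : α) ≠ f a := fun h => haz.2 (h ▸ hfa.1)
    refine ⟨?_, hBsub hfa.1, insert (a : α) (B \ {f a}), hbase a, ?_⟩
    · rw [hzB] at haz; exact haz.2
    · intro e he
      rcases he with rfl | ⟨heB, hef⟩
      · exact ⟨mem_insert _ _, by simp [hne]⟩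
      · exact ⟨mem_insert_of_mem _ (hBsub heB), hef⟩
  · intro e he
    rw [Set.mem_toFinset] at he
    exact ⟨he.1, B, hBbase, subset_diff_singleton hBsub he.2⟩
  · have himg : Finset.univ.image f = Bd := by
      apply Finset.eq_of_subset_of_card_le
      · intro b hb
        simp only [Finset.mem_image, Finset.mem_univ, true_and] at hb
        obtain ⟨a, rfl⟩ := hb
        exact Set.mem_toFinset.mpr (hfBd a)
      · rw [Finset.card_image_of_injective _ hfinj, Finset.card_univ, Fintype.card_coe,
          ← Set.ncard_eq_toFinset_card', ← Set.ncard_eq_toFinset_card']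
        exact (hBbase.ncard_diff_comm hz).le
    have hsum_pairs : ∑ p ∈ Finset.univ.image (fun a : ↥Zd => ((a : α), f a)),
        (w p.2 - w p.1) = ∑ b ∈ Bd, w b - ∑ a ∈ Zd, w a := by
      rw [Finset.sum_image (fun a _ b _ h => Subtype.ext (congrArg Prod.fst h))]
      rw [Finset.sum_sub_distrib]
      congr 1
      · rw [← himg, Finset.sum_image (fun a _ b _ h => hfinj h)]
      · exact Finset.sum_coe_sort Zd w
    have hfx : ∑ᶠ e ∈ x, w e = ∑ e ∈ x.toFinset, w e := by
      conv_lhs => rw [← Set.coe_toFinset x]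
      rw [finsum_mem_coe_finset]
    have hfz : ∑ᶠ e ∈ z, w e = ∑ e ∈ z.toFinset, w e := by
      conv_lhs => rw [← Set.coe_toFinset z]
      rw [finsum_mem_coe_finset]
    have hY : (x \ B).toFinset = x.toFinset \ B.toFinset := Set.toFinset_diff x B
    have hBdeq : Bd = B.toFinset \ z.toFinset := Set.toFinset_diff B z
    have hZdeq : Zd = z.toFinset \ B.toFinset := Set.toFinset_diff z B
    have s1 : ∑ e ∈ x.toFinset \ B.toFinset, w e + ∑ e ∈ B.toFinset, w e
        = ∑ e ∈ x.toFinset, w e :=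
      Finset.sum_sdiff (Set.toFinset_subset_toFinset.mpr hBsub)
    have s2 : ∑ e ∈ B.toFinset \ (B.toFinset ∩ z.toFinset), w e
        + ∑ e ∈ B.toFinset ∩ z.toFinset, w e = ∑ e ∈ B.toFinset, w e :=
      Finset.sum_sdiff Finset.inter_subset_left
    have s3 : ∑ e ∈ z.toFinset \ (B.toFinset ∩ z.toFinset), w e
        + ∑ e ∈ B.toFinset ∩ z.toFinset, w e = ∑ e ∈ z.toFinset, w e :=
      Finset.sum_sdiff Finset.inter_subset_right
    have e2 : B.toFinset \ (B.toFinset ∩ z.toFinset) = B.toFinset \ z.toFinset := by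
      ext a; simp only [Finset.mem_sdiff, Finset.mem_inter]; tauto
    have e3 : z.toFinset \ (B.toFinset ∩ z.toFinset) = z.toFinset \ B.toFinset := by
      ext a; simp only [Finset.mem_sdiff, Finset.mem_inter]; tauto
    rw [e2] at s2
    rw [e3] at s3
    rw [hfx, hfz, hsum_pairs, hBdeq, hZdeq, hY]
    linarith [s1, s2, s3]
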